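/- Let G be an ordered graph on [n] with m > 0 edges, and let S_R(n,m) be the reversed quasi-star. Then the number of copies of the ordered left star S_L(k) in G is at least the number of copies of S_L(k) in S_R(n,m). -/

import Mathlib

open Finset

-- The right-degree of vertex `i` in an ordered graph on `Fin n`:
-- the number of neighbors `j` with `i < j`.
open scoped Classical in
noncomputable def rdeg {n : ℕ} (G : SimpleGraph (Fin n)) (i : Fin n) : ℕ :=
  (Finset.univ.filter fun j => G.Adj i j ∧ i < j).card

-- The number of copies of the ordered left star `S_L(k)` in an ordered graph on `Fin n`:
-- sets of `k+1` vertices whose minimum is adjacent to all the others.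
open scoped Classical in
noncomputable def leftStarCount {n : ℕ} (G : SimpleGraph (Fin n)) (k : ℕ) : ℕ :=
  ((Finset.univ : Finset (Finset (Fin n))).filter fun s =>
    s.card = k + 1 ∧ ∃ v ∈ s, (∀ w ∈ s, v ≤ w) ∧ ∀ w ∈ s, w ≠ v → G.Adj v w).card

-- The number of edges of an ordered graph on `Fin n`.
open scoped Classical in
noncomputable def ecount {n : ℕ} (G : SimpleGraph (Fin n)) : ℕ :=
  (Finset.univ.filter fun p : Fin n × Fin n => p.1 < p.2 ∧ G.Adj p.1 p.2).card

-- `f(n,a) = C(a,2) + a(n-a)`, the number of edges of the quasi-star with full part `[a]`.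
def quasiStarEdges (n a : ℕ) : ℕ := a.choose 2 + a * (n - a)

-- The ordered quasi-star `S_L(n,m)` (0-indexed).
def quasiStar (n a b : ℕ) : SimpleGraph (Fin n) :=
  SimpleGraph.fromRel fun v w =>
    v.val < w.val ∧ (v.val < a ∨ (v.val = a ∧ w.val ≤ a + b))

-- The order-reversing map on `Fin n`.
def revFin {n : ℕ} (v : Fin n) : Fin n := ⟨n - 1 - v.val, by have := v.isLt; omega⟩

-- The reversed quasi-star `S_R(n,m)`: `S_L(n,m)` with the vertex order reversed.
def rQuasiStar (n a b : ℕ) : SimpleGraph (Fin n) :=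
  (quasiStar n a b).comap revFin

/-! ### Auxiliary machinery -/

section Aux
open scoped Classical

/-- The right-degree sequence of the reversed quasi-star, as a function of `u = n - 1 - i`. -/
def eseq (n a b u : ℕ) : ℕ := min u a + (if a < u ∧ u ≤ a + b then 1 else 0)

lemma hockey (k : ℕ) (d : ℕ) : ∑ t ∈ range d, t.choose k = d.choose (k+1) := by
  induction d with
  | zero => simp [Nat.choose_eq_zero_of_lt]
  | succ d ih => rw [Finset.sum_range_succ, ih, Nat.choose_succ_succ, Nat.add_comm]

lemma card_fin_filter (n : ℕ) (p : ℕ → Prop) [DecidablePred p]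
    [DecidablePred fun i : Fin n => p i.val] :
    (univ.filter fun i : Fin n => p i.val).card = ((range n).filter p).card := by
  rw [Finset.card_filter, Finset.card_filter,
    ← Fin.sum_univ_eq_sum_range (fun i => if p i then 1 else 0) n]
  refine Finset.sum_congr rfl fun i _ => ?_
  congr 1

lemma phi (n k : ℕ) (d : Fin n → ℕ) (hd : ∀ i, d i ≤ n) :
    ∑ i, (d i).choose (k+1)
      = ∑ t ∈ range n, (univ.filter fun i => t < d i).card * t.choose k := by
  have : ∀ t, (univ.filter fun i => t < d i).card * t.choose k
      = ∑ i : Fin n, if t < d i then t.choose k else 0 := by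
    intro t
    rw [Finset.card_filter, Finset.sum_mul]
    simp [ite_mul]
  simp_rw [this]
  rw [Finset.sum_comm]
  refine Finset.sum_congr rfl fun i _ => ?_
  rw [← hockey k (d i), ← Finset.sum_filter]
  congr 1
  ext t
  simp only [mem_filter, mem_range]
  constructor
  · rintro ht; exact ⟨lt_of_lt_of_le ht (hd i), ht⟩
  · rintro ⟨_, h⟩; exact h

lemma sum_rdeg {n : ℕ} (G : SimpleGraph (Fin n)) : ∑ i, rdeg G i = ecount G := by
  unfold rdeg ecount
  simp_rw [Finset.card_filter]
  rw [Fintype.sum_prod_type]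
  exact Finset.sum_congr rfl fun i _ => Finset.sum_congr rfl fun j _ => by
    simp [and_comm]

lemma leftStarCount_eq {n : ℕ} (G : SimpleGraph (Fin n)) (k : ℕ) :
    leftStarCount G k = ∑ i, (rdeg G i).choose k := by
  unfold leftStarCount rdeg
  have hset : ((Finset.univ : Finset (Finset (Fin n))).filter fun s =>
      s.card = k + 1 ∧ ∃ v ∈ s, (∀ w ∈ s, v ≤ w) ∧ ∀ w ∈ s, w ≠ v → G.Adj v w)
      = univ.biUnion (fun v : Fin n =>
        (((univ.filter fun j => G.Adj v j ∧ v < j)).powersetCard k).image (insert v)) := by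
    ext s
    simp only [mem_filter, mem_univ, true_and, mem_biUnion, mem_image, mem_powersetCard]
    constructor
    · rintro ⟨hcard, v, hv, hmin, hadj⟩
      refine ⟨v, s.erase v, ⟨?_, ?_⟩, ?_⟩
      · intro w hw
        rw [mem_erase] at hw
        simp only [mem_filter, mem_univ, true_and]
        exact ⟨hadj w hw.2 hw.1, lt_of_le_of_ne (hmin w hw.2) (Ne.symm hw.1)⟩
      · rw [Finset.card_erase_of_mem hv, hcard]; rfl
      · exact Finset.insert_erase hv
    · rintro ⟨v, T, ⟨hT, hTcard⟩, rfl⟩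
      have hvT : v ∉ T := by
        intro h
        have := hT h
        simp only [mem_filter] at this
        exact absurd this.2.2 (lt_irrefl v)
      have hlt : ∀ w ∈ T, v < w := fun w hw => by
        have := hT hw; simp only [mem_filter] at this; exact this.2.2
      refine ⟨by rw [Finset.card_insert_of_notMem hvT, hTcard], v, mem_insert_self _ _, ?_, ?_⟩
      · intro w hw
        rcases mem_insert.mp hw with rfl | hw
        · exact le_refl _
        · exact le_of_lt (hlt w hw)
      · intro w hw hne
        rcases mem_insert.mp hw with rfl | hw
        · exact absurd rfl hne
        · have := hT hw; simp only [mem_filter] at this; exact this.2.1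
  rw [hset, Finset.card_biUnion]
  · refine Finset.sum_congr rfl fun v _ => ?_
    rw [Finset.card_image_of_injOn, Finset.card_powersetCard]
    intro T hT T' hT' hins
    rw [Finset.mem_coe, Finset.mem_powersetCard] at hT hT'
    have hvT : v ∉ T := fun h => by
      have := hT.1 h; simp only [mem_filter] at this; exact absurd this.2.2 (lt_irrefl v)
    have hvT' : v ∉ T' := fun h => by
      have := hT'.1 h; simp only [mem_filter] at this; exact absurd this.2.2 (lt_irrefl v)
    have := congrArg (fun s => Finset.erase s v) hins
    simpa [Finset.erase_insert hvT, Finset.erase_insert hvT'] using this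
  · intro x _ y _ hxy
    rw [Function.onFun, Finset.disjoint_left]
    rintro s hs hs'
    simp only [mem_image, mem_powersetCard] at hs hs'
    obtain ⟨T, ⟨hT, _⟩, rfl⟩ := hs
    obtain ⟨T', ⟨hT', _⟩, h⟩ := hs'
    apply hxy
    have hx : ∀ w ∈ insert x T, x ≤ w := by
      intro w hw
      rcases mem_insert.mp hw with rfl | hw
      · exact le_refl _
      · have := hT hw; simp only [mem_filter] at this; exact le_of_lt this.2.2
    have hy : ∀ w ∈ insert y T', y ≤ w := by
      intro w hw
      rcases mem_insert.mp hw with rfl | hw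
      · exact le_refl _
      · have := hT' hw; simp only [mem_filter] at this; exact le_of_lt this.2.2
    have h1 : y ≤ x := hy x (h ▸ mem_insert_self x T)
    have h2 : x ≤ y := hx y (h ▸ mem_insert_self y T')
    exact le_antisymm h2 h1

lemma rdeg_rq {n : ℕ} (a b : ℕ) (i : Fin n) :
    rdeg (rQuasiStar n a b) i = eseq n a b (n - 1 - i.val) := by
  have hin := i.isLt
  unfold rdeg
  have hP : ∀ j : Fin n, ((rQuasiStar n a b).Adj i j ∧ i < j) ↔
      (i.val < j.val ∧ (n-1-j.val < a ∨ (n-1-j.val = a ∧ n-1-i.val ≤ a + b))) := by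
    intro j
    have hjn := j.isLt
    simp only [rQuasiStar, SimpleGraph.comap_adj, quasiStar, SimpleGraph.fromRel_adj,
      revFin, Fin.lt_def, ne_eq, Fin.mk.injEq]
    constructor
    · rintro ⟨⟨hne, h | h⟩, hij⟩
      · omega
      · omega
    · rintro ⟨hij, h⟩
      exact ⟨⟨by omega, Or.inr ⟨by omega, by omega⟩⟩, hij⟩
  have : (univ.filter fun j : Fin n => (rQuasiStar n a b).Adj i j ∧ i < j)
      = (univ.filter fun j : Fin n =>
          i.val < j.val ∧ (n-1-j.val < a ∨ (n-1-j.val = a ∧ n-1-i.val ≤ a + b))) := by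
    apply Finset.filter_congr
    intro j _
    simp [hP j]
  rw [this]
  set u := n - 1 - i.val with hu
  set S : Finset ℕ := range (min u a) ∪ (if a < u ∧ u ≤ a + b then {a} else ∅) with hS
  have hcard : S.card = eseq n a b u := by
    rw [hS, eseq]
    split_ifs with hc
    · rw [Finset.card_union_of_disjoint (by simp)]
      simp
    · simp
  rw [← hcard]
  apply Finset.card_bij (fun (j : Fin n) _ => n - 1 - j.val)
  · intro j hj
    have hjn := j.isLt
    simp only [mem_filter, mem_univ, true_and] at hj
    have hj : i.val < j.val ∧ (n-1-j.val < a ∨ (n-1-j.val = a ∧ u ≤ a + b)) := ⟨hj.1, hj.2⟩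
    simp only [hS, mem_union, mem_range]
    rcases hj.2 with h | h
    · left; omega
    · right
      split_ifs with hc
      · simp; omega
      · exact absurd ⟨by omega, by omega⟩ hc
  · intro j hj j' hj' h
    have := j.isLt; have := j'.isLt
    exact Fin.ext (by omega)
  · intro s hs
    simp only [hS, mem_union, mem_range] at hs
    have hsn : s < n := by
      rcases hs with h | h
      · omega
      · split_ifs at h with hc
        · simp at h; omega
        · simp at h
    refine ⟨⟨n - 1 - s, by omega⟩, ?_, ?_⟩
    · simp only [mem_filter, mem_univ, true_and]
      rcases hs with h | h
      · constructor
        · omega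
        · left; omega
      · split_ifs at h with hc
        · simp at h
          exact ⟨by omega, Or.inr ⟨by omega, by omega⟩⟩
        · simp at h
    · rcases hs with h | h
      · simp; omega
      · split_ifs at h with hc
        · simp at h; simp; omega
        · simp at h

lemma qse_sum {n : ℕ} : ∀ {a : ℕ}, a ≤ n → ∑ t ∈ range a, (n - 1 - t) = quasiStarEdges n a := by
  intro a
  induction a with
  | zero => simp [quasiStarEdges]
  | succ a ih =>
    intro han
    rw [Finset.sum_range_succ, ih (by omega)]
    unfold quasiStarEdges
    rw [show a + 1 = a.succ from rfl, Nat.choose_succ_succ a 1]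
    obtain ⟨x, hx⟩ : ∃ x, n - a = x + 1 := ⟨n - a - 1, by omega⟩
    have h2 : n - (a + 1) = x := by omega
    have h3 : n - 1 - a = x := by omega
    rw [hx, h2, h3, Nat.choose_one_right]
    simp only [Nat.succ_eq_add_one]
    norm_num
    ring

lemma E_lt {n a b t : ℕ} (ht : t < a) :
    (univ.filter fun i : Fin n => t < eseq n a b (n - 1 - i.val)).card = n - 1 - t := by
  refine (card_fin_filter n fun x => t < eseq n a b (n - 1 - x)).trans ?_
  have : (range n).filter (fun x => t < eseq n a b (n - 1 - x)) = range (n - 1 - t) := by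
    ext x
    rw [mem_filter]
    simp only [mem_filter, mem_range, eseq]
    split_ifs with hc <;> omega
  rw [this, Finset.card_range]

lemma E_eq {n a b : ℕ} (hside : b = 0 ∨ a + b + 2 ≤ n) :
    (univ.filter fun i : Fin n => a < eseq n a b (n - 1 - i.val)).card = b := by
  refine (card_fin_filter n fun x => a < eseq n a b (n - 1 - x)).trans ?_
  have : (range n).filter (fun x => a < eseq n a b (n - 1 - x)) = Ico (n-1-a-b) (n-1-a) := by
    ext x
    rw [mem_filter]
    simp only [mem_filter, mem_range, mem_Ico, eseq]
    split_ifs with hc <;> omega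
  rw [this, Nat.card_Ico]
  omega

lemma E_gt {n a b t : ℕ} (ht : a < t) :
    (univ.filter fun i : Fin n => t < eseq n a b (n - 1 - i.val)).card = 0 := by
  refine (card_fin_filter n fun x => t < eseq n a b (n - 1 - x)).trans ?_
  have : (range n).filter (fun x => t < eseq n a b (n - 1 - x)) = ∅ := by
    ext x
    rw [mem_filter]
    simp only [mem_filter, mem_range, Finset.notMem_empty, iff_false, not_and, not_lt, eseq]
    intro _
    split_ifs with hc <;> omega
  rw [this, Finset.card_empty]

lemma N_cap {n t : ℕ} (d : Fin n → ℕ) (hd : ∀ i, d i ≤ n - 1 - i.val) :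
    (univ.filter fun i : Fin n => t < d i).card ≤ n - 1 - t := by
  have h1 : (univ.filter fun i : Fin n => t < d i)
      ⊆ (univ.filter fun i : Fin n => t < n - 1 - i.val) := by
    intro i hi
    simp only [mem_filter, mem_univ, true_and] at hi ⊢
    exact lt_of_lt_of_le hi (hd i)
  refine le_trans (Finset.card_le_card h1) ?_
  refine le_of_eq ((card_fin_filter n fun x => t < n - 1 - x).trans ?_)
  have : (range n).filter (fun x => t < n - 1 - x) = range (n - 1 - t) := by
    ext x; simp only [mem_filter, mem_range]; omega
  rw [this, Finset.card_range]

lemma rdeg_cap {n : ℕ} (G : SimpleGraph (Fin n)) (i : Fin n) : rdeg G i ≤ n - 1 - i.val := by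
  unfold rdeg
  have h1 : (univ.filter fun j : Fin n => G.Adj i j ∧ i < j)
      ⊆ (univ.filter fun j : Fin n => i.val < j.val) := by
    intro j hj
    simp only [mem_filter, mem_univ, true_and] at hj ⊢
    exact hj.2
  refine le_trans (Finset.card_le_card h1) ?_
  refine le_of_eq ((card_fin_filter n fun x => i.val < x).trans ?_)
  have : (range n).filter (fun x => i.val < x) = Ico (i.val + 1) n := by
    ext x; simp only [mem_filter, mem_range, mem_Ico]; omega
  rw [this, Nat.card_Ico]
  omega

lemma main_ineq {n a b m : ℕ} (N w : ℕ → ℕ) (han : a ≤ n)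
    (hw : ∀ s t, s ≤ t → w s ≤ w t)
    (hNle : ∀ t, t < a → N t ≤ n - 1 - t)
    (hNsum : ∑ t ∈ range n, N t = m)
    (hm : (∑ t ∈ range a, (n - 1 - t)) + b = m) :
    (∑ t ∈ range a, (n - 1 - t) * w t) + b * w a ≤ ∑ t ∈ range n, N t * w t := by
  set D : ℕ → ℕ := fun t => n - 1 - t - N t with hD
  have hsplit : ∑ t ∈ range n, N t * w t
      = ∑ t ∈ range a, N t * w t + ∑ t ∈ Ico a n, N t * w t := by
    rw [range_eq_Ico, ← Finset.sum_Ico_consecutive _ (Nat.zero_le a) han, ← range_eq_Ico]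
  have hsplit2 : ∑ t ∈ range n, N t = ∑ t ∈ range a, N t + ∑ t ∈ Ico a n, N t := by
    rw [range_eq_Ico, ← Finset.sum_Ico_consecutive _ (Nat.zero_le a) han, ← range_eq_Ico]
  have hND : ∑ t ∈ range a, (n - 1 - t) = ∑ t ∈ range a, N t + ∑ t ∈ range a, D t := by
    rw [← Finset.sum_add_distrib]
    refine Finset.sum_congr rfl fun t ht => ?_
    have := hNle t (mem_range.mp ht)
    simp only [hD]; omega
  have hS2 : b + ∑ t ∈ range a, D t ≤ ∑ t ∈ Ico a n, N t := by omega
  have step1 : (∑ t ∈ range a, (n - 1 - t) * w t)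
      = ∑ t ∈ range a, N t * w t + ∑ t ∈ range a, D t * w t := by
    rw [← Finset.sum_add_distrib]
    refine Finset.sum_congr rfl fun t ht => ?_
    have := hNle t (mem_range.mp ht)
    have : n - 1 - t = N t + D t := by simp only [hD]; omega
    rw [this, add_mul]
  have step2 : ∑ t ∈ range a, D t * w t ≤ (∑ t ∈ range a, D t) * w a := by
    rw [Finset.sum_mul]
    refine Finset.sum_le_sum fun t ht => ?_
    exact Nat.mul_le_mul_left _ (hw t a (le_of_lt (mem_range.mp ht)))
  have step3 : (b + ∑ t ∈ range a, D t) * w a ≤ ∑ t ∈ Ico a n, N t * w t := by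
    calc (b + ∑ t ∈ range a, D t) * w a ≤ (∑ t ∈ Ico a n, N t) * w a :=
          Nat.mul_le_mul_right _ hS2
      _ = ∑ t ∈ Ico a n, N t * w a := by rw [Finset.sum_mul]
      _ ≤ ∑ t ∈ Ico a n, N t * w t :=
          Finset.sum_le_sum fun t ht => Nat.mul_le_mul_left _ (hw a t (mem_Ico.mp ht).1)
  calc (∑ t ∈ range a, (n - 1 - t) * w t) + b * w a
      = ∑ t ∈ range a, N t * w t + (∑ t ∈ range a, D t * w t + b * w a) := by
        rw [step1]; ring
    _ ≤ ∑ t ∈ range a, N t * w t + ((∑ t ∈ range a, D t) * w a + b * w a) := by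
        exact Nat.add_le_add_left (Nat.add_le_add_right step2 _) _
    _ = ∑ t ∈ range a, N t * w t + (b + ∑ t ∈ range a, D t) * w a := by ring
    _ ≤ ∑ t ∈ range a, N t * w t + ∑ t ∈ Ico a n, N t * w t := Nat.add_le_add_left step3 _
    _ = ∑ t ∈ range n, N t * w t := hsplit.symm

end Aux

/-- Among ordered graphs on `[n]` with `m > 0` edges, the reversed quasi-star `S_R(n,m)`
minimizes the number of copies of the ordered left star `S_L(k)`. -/
theorem rQuasiStar_le_leftStarCount {n m a b k : ℕ} (G : SimpleGraph (Fin n))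
    (hm : 0 < m) (hmn : m ≤ n.choose 2) (hG : ecount G = m) (hk : 0 < k)
    (han : a ≤ n) (ha : quasiStarEdges n a ≤ m)
    (hamax : ∀ a' ≤ n, quasiStarEdges n a' ≤ m → a' ≤ a)
    (hb : b = m - quasiStarEdges n a) :
    leftStarCount (rQuasiStar n a b) k ≤ leftStarCount G k := by
  classical
  obtain ⟨k', rfl⟩ : ∃ k', k = k' + 1 := ⟨k - 1, by omega⟩
  -- side fact : `b = 0` or `a + b + 2 ≤ n`
  have hside : b = 0 ∨ a + b + 2 ≤ n := by
    by_cases hb0 : b = 0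
    · exact Or.inl hb0
    right
    have han' : a < n := by
      rcases lt_or_eq_of_le han with h | h
      · exact h
      · exfalso
        apply hb0
        have : quasiStarEdges n a = n.choose 2 := by
          rw [← h]; unfold quasiStarEdges; simp
        omega
    have hgt : m < quasiStarEdges n (a + 1) := by
      by_contra h
      have := hamax (a + 1) (by omega) (by omega)
      omega
    have e1 : quasiStarEdges n (a + 1) = quasiStarEdges n a + (n - 1 - a) := by
      rw [← qse_sum (show a + 1 ≤ n by omega), ← qse_sum (show a ≤ n by omega),
        Finset.sum_range_succ]
    omega
  -- rewrite both sides as weighted layer sums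
  rw [leftStarCount_eq, leftStarCount_eq]
  have hLHS : ∀ i : Fin n, rdeg (rQuasiStar n a b) i = eseq n a b (n - 1 - i.val) :=
    rdeg_rq a b
  have hcapG : ∀ i : Fin n, rdeg G i ≤ n - 1 - i.val := rdeg_cap G
  have hsumG : ∑ t ∈ range n, (univ.filter fun i : Fin n => t < rdeg G i).card = m := by
    have h0 := phi n 0 (rdeg G) (fun i => le_trans (hcapG i) (by omega))
    simp only [zero_add, Nat.choose_one_right, Nat.choose_zero_right, mul_one] at h0
    rw [← h0, sum_rdeg, hG]
  have hqse : (∑ t ∈ range a, (n - 1 - t)) + b = m := by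
    rw [qse_sum han]; omega
  calc ∑ i : Fin n, (rdeg (rQuasiStar n a b) i).choose (k' + 1)
      = ∑ i : Fin n, (eseq n a b (n - 1 - i.val)).choose (k' + 1) :=
        Finset.sum_congr rfl fun i _ => by rw [hLHS i]
    _ = ∑ t ∈ range n,
          (univ.filter fun i : Fin n => t < eseq n a b (n - 1 - i.val)).card * t.choose k' := by
        refine phi n k' (fun i => eseq n a b (n - 1 - i.val)) fun i => ?_
        have hin := i.isLt
        simp only [eseq]
        split_ifs with hc <;> omega
    _ = (∑ t ∈ range a, (n - 1 - t) * t.choose k') + b * a.choose k' := by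
        rw [range_eq_Ico, ← Finset.sum_Ico_consecutive _ (Nat.zero_le a) han, ← range_eq_Ico]
        congr 1
        · exact Finset.sum_congr rfl fun t ht => by rw [E_lt (mem_range.mp ht)]
        · rcases lt_or_eq_of_le han with hlt | heq
          · rw [Finset.sum_eq_single_of_mem a (mem_Ico.mpr ⟨le_refl a, hlt⟩)]
            · rw [E_eq hside]
            · intro t ht hne
              rw [E_gt (lt_of_le_of_ne (mem_Ico.mp ht).1 (Ne.symm hne))]
              ring
          · have hb0 : b = 0 := by omega
            rw [← heq]
            simp [hb0]
    _ ≤ ∑ t ∈ range n, (univ.filter fun i : Fin n => t < rdeg G i).card * t.choose k' := by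
        refine main_ineq _ _ han (fun s t hst => Nat.choose_le_choose k' hst)
          (fun t _ => N_cap (rdeg G) hcapG) hsumG hqse
    _ = ∑ i : Fin n, (rdeg G i).choose (k' + 1) := (phi n k' (rdeg G)
          (fun i => le_trans (hcapG i) (by omega))).symm
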